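/- The Poisson bracket on ℂ⁴ given by {zᵢ,zⱼ} = zᵢzⱼ for i<j, {zᵢ*,zⱼ*} = -zᵢ*zⱼ* for i<j, {zᵢ,zⱼ*} = -zᵢzⱼ* for i≠j, {zⱼ*,zⱼ} = Σ_{i<j} zⱼzⱼ* satisfies the Jacobi identity (on polynomial functions). -/

import Mathlib

open MvPolynomial

private lemma jacobi_aux
    (B : MvPolynomial (Fin 4 ⊕ Fin 4) ℂ →ₗ[ℂ]
         MvPolynomial (Fin 4 ⊕ Fin 4) ℂ →ₗ[ℂ] MvPolynomial (Fin 4 ⊕ Fin 4) ℂ)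
    (hskew : ∀ f g, B f g = - B g f)
    (hleib : ∀ f g h, B (f * g) h = f * B g h + B f h * g)
    (hgen : ∀ a b, ∃ c : ℂ, B (X a) (X b) = C c * (X a * X b)) :
    ∀ f g h, B f (B g h) + B g (B h f) + B h (B f g) = 0 := by
  have hleib2 : ∀ f g h, B f (g * h) = g * B f h + B f g * h := by
    intro f g h
    rw [hskew f (g * h), hleib g h f, hskew g f, hskew h f]; ring
  have hB1 : ∀ f, B 1 f = 0 := by
    intro f
    have h := hleib 1 1 f
    rw [one_mul, one_mul, mul_one] at h
    linear_combination -h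
  have hC : ∀ (a : ℂ) f, B (C a) f = 0 := by
    intro a f
    have : (C a : MvPolynomial (Fin 4 ⊕ Fin 4) ℂ) = a • 1 := by
      rw [smul_eq_C_mul, mul_one]
    rw [this, map_smul, LinearMap.smul_apply, hB1, smul_zero]
  have hCr : ∀ f (a : ℂ), B f (C a) = 0 := by
    intro f a
    rw [hskew, hC, neg_zero]
  have hder : ∀ f f' g h,
      B (f * f') (B g h) + B g (B h (f * f')) + B h (B (f * f') g)
      = f * (B f' (B g h) + B g (B h f') + B h (B f' g))
        + (B f (B g h) + B g (B h f) + B h (B f g)) * f' := by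
    intro f f' g h
    rw [hleib f f' (B g h), hleib2 h f f', map_add, hleib2 g f (B h f'),
        hleib2 g (B h f) f', hleib f f' g, map_add, hleib2 h f (B f' g),
        hleib2 h (B f g) f']
    linear_combination (B h f') * hskew g f + (B h f) * hskew g f'
  have key : ∀ g h, (∀ n, B (X n) (B g h) + B g (B h (X n)) + B h (B (X n) g) = 0) →
      ∀ f, B f (B g h) + B g (B h f) + B h (B f g) = 0 := by
    intro g h hX f
    induction f using MvPolynomial.induction_on with
    | C a => simp [hC, hCr]
    | add p q hp hq =>
        simp only [map_add, LinearMap.add_apply]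
        linear_combination hp + hq
    | mul_X p n hp =>
        rw [hder p (X n) g h, hp, hX n]; ring
  have hXXX : ∀ a b c, B (X a) (B (X b) (X c)) + B (X b) (B (X c) (X a))
      + B (X c) (B (X a) (X b)) = 0 := by
    intro a b c
    obtain ⟨cab, hab⟩ := hgen a b
    obtain ⟨cbc, hbc⟩ := hgen b c
    obtain ⟨cac, hac⟩ := hgen a c
    have hba : B (X b) (X a) = -(C cab * (X a * X b)) := by rw [hskew, hab]
    have hcb : B (X c) (X b) = -(C cbc * (X b * X c)) := by rw [hskew, hbc]
    have hca : B (X c) (X a) = -(C cac * (X a * X c)) := by rw [hskew, hac]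
    simp only [hab, hbc, hac, hba, hcb, hca, map_neg, hleib2, hCr, mul_neg,
      neg_mul, zero_mul, mul_zero, add_zero, zero_add]
    ring
  have step1 : ∀ a b f, B f (B (X a) (X b)) + B (X a) (B (X b) f)
      + B (X b) (B f (X a)) = 0 :=
    fun a b f => key (X a) (X b) (fun n => hXXX n a b) f
  have step2 : ∀ a f g, B f (B g (X a)) + B g (B (X a) f) + B (X a) (B f g) = 0 := by
    intro a f g
    have h1' := key (X a) f (fun n => by linear_combination step1 n a f)
    linear_combination h1' g
  intro f g h
  have h2' := key f g (fun n => by linear_combination step2 n f g)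
  linear_combination h2' h

theorem poisson_bracket_jacobi
    (B : MvPolynomial (Fin 4 ⊕ Fin 4) ℂ →ₗ[ℂ]
         MvPolynomial (Fin 4 ⊕ Fin 4) ℂ →ₗ[ℂ] MvPolynomial (Fin 4 ⊕ Fin 4) ℂ)
    (z w : Fin 4 → MvPolynomial (Fin 4 ⊕ Fin 4) ℂ)
    (hz : ∀ i, z i = MvPolynomial.X (Sum.inl i))
    (hw : ∀ i, w i = MvPolynomial.X (Sum.inr i))
    (hskew : ∀ f g, B f g = - B g f)
    (hleib : ∀ f g h, B (f * g) h = f * B g h + B f h * g)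
    (h1 : ∀ i j, i < j → B (z i) (z j) = z i * z j)
    (h2 : ∀ i j, i < j → B (w i) (w j) = -(w i * w j))
    (h3 : ∀ i j, i ≠ j → B (z i) (w j) = -(z i * w j))
    (h4 : ∀ j, B (w j) (z j) = ∑ i ∈ Finset.univ.filter (· < j), z j * w j) :
    ∀ f g h, B f (B g h) + B g (B h f) + B h (B f g) = 0 := by
  simp only [hz, hw] at h1 h2 h3 h4
  have hself : ∀ f, B f f = 0 := by
    intro f
    have h := hskew f f
    have h2 : (2 : ℂ) • B f f = 0 := by rw [two_smul]; linear_combination h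
    exact (smul_eq_zero.mp h2).resolve_left (by norm_num)
  apply jacobi_aux B hskew hleib
  rintro (i | i) (j | j)
  · rcases lt_trichotomy i j with h | h | h
    · exact ⟨1, by rw [h1 i j h]; simp⟩
    · subst h; exact ⟨0, by rw [hself]; simp⟩
    · refine ⟨-1, ?_⟩
      rw [hskew, h1 j i h]
      simp only [map_neg, map_one]
      ring
  · by_cases h : i = j
    · subst h
      refine ⟨-((Finset.univ.filter (· < i)).card : ℂ), ?_⟩
      rw [hskew, h4 i, Finset.sum_const, nsmul_eq_mul]
      simp only [map_neg, map_natCast]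
      ring
    · exact ⟨-1, by rw [h3 i j h]; simp only [map_neg, map_one]; ring⟩
  · by_cases h : i = j
    · subst h
      refine ⟨((Finset.univ.filter (· < i)).card : ℂ), ?_⟩
      rw [h4 i, Finset.sum_const, nsmul_eq_mul]
      simp only [map_natCast]
      ring
    · refine ⟨1, ?_⟩
      rw [hskew, h3 j i (Ne.symm h)]
      simp only [map_one]
      ring
  · rcases lt_trichotomy i j with h | h | h
    · exact ⟨-1, by rw [h2 i j h]; simp only [map_neg, map_one]; ring⟩
    · subst h; exact ⟨0, by rw [hself]; simp⟩
    · refine ⟨1, ?_⟩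
      rw [hskew, h2 j i h]
      simp only [map_one]
      ring
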